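/- For every s > 0, Γ(s+1) = (s/e)^s · √s · ∫_0^∞ 2·(y(u/√s) + y(-u/√s)) · e^{-u²} du, where y(v) = v/f(v) for v ≠ 0, y(0) = √2/2, and f is the inverse of x ↦ sgn(x)·√(x - ln(1+x)). -/

import Mathlib

open Real Set MeasureTheory

noncomputable def phiAux (t : ℝ) : ℝ := Real.sign t * Real.sqrt (t - Real.log (1 + t))

noncomputable def phidAux (t : ℝ) : ℝ :=
  Real.sign t * (t / (1 + t) / (2 * Real.sqrt (t - Real.log (1 + t))))

lemma sub_log_pos {t : ℝ} (ht : -1 < t) (ht0 : t ≠ 0) : 0 < t - Real.log (1 + t) := by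
  have h1 : (0:ℝ) < 1 + t := by linarith
  have h2 : t + 1 < Real.exp t := Real.add_one_lt_exp ht0
  have h3 : Real.log (1 + t) < t := by
    calc Real.log (1 + t) < Real.log (Real.exp t) := Real.log_lt_log h1 (by linarith)
    _ = t := Real.log_exp t
  linarith

lemma hasDerivAt_gAux {t : ℝ} (ht : -1 < t) :
    HasDerivAt (fun x : ℝ => x - Real.log (1 + x)) (t / (1 + t)) t := by
  have h1 : (1:ℝ) + t ≠ 0 := by linarith
  have hl : HasDerivAt (fun x : ℝ => Real.log (1 + x)) (1 / (1 + t)) t := by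
    have := (Real.hasDerivAt_log h1).comp t ((hasDerivAt_id t).const_add 1)
    simpa [one_div, Function.comp_def] using this
  have := (hasDerivAt_id t).sub hl
  exact this.congr_deriv (by rw [eq_div_iff h1, sub_mul, one_div_mul_cancel h1]; ring)

lemma gAux_strictMonoOn : StrictMonoOn (fun x : ℝ => x - Real.log (1 + x)) (Ici 0) := by
  apply strictMonoOn_of_deriv_pos (convex_Ici 0)
  · intro x hx
    exact (hasDerivAt_gAux (by simp at hx; linarith)).continuousAt.continuousWithinAt
  · intro x hx
    rw [interior_Ici] at hx
    have hx' : (0:ℝ) < x := hx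
    rw [(hasDerivAt_gAux (by linarith)).deriv]
    positivity

lemma gAux_strictAntiOn : StrictAntiOn (fun x : ℝ => x - Real.log (1 + x)) (Ioc (-1) 0) := by
  apply strictAntiOn_of_deriv_neg (convex_Ioc (-1) 0)
  · intro x hx
    simp only [mem_Ioc] at hx
    exact (hasDerivAt_gAux hx.1).continuousAt.continuousWithinAt
  · intro x hx
    rw [interior_Ioc] at hx
    simp only [mem_Ioo] at hx
    rw [(hasDerivAt_gAux hx.1).deriv]
    apply div_neg_of_neg_of_pos hx.2
    linarith [hx.1]

lemma phiAux_strictMonoOn : StrictMonoOn phiAux (Ioi (-1)) := by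
  intro a ha b hb hab
  simp only [mem_Ioi] at ha hb
  unfold phiAux
  rcases lt_trichotomy a 0 with ha0 | ha0 | ha0
  · rcases lt_trichotomy b 0 with hb0 | hb0 | hb0
    · rw [Real.sign_of_neg ha0, Real.sign_of_neg hb0]
      have hga : b - Real.log (1 + b) < a - Real.log (1 + a) :=
        gAux_strictAntiOn ⟨ha, ha0.le⟩ ⟨hb, hb0.le⟩ hab
      have hgb : 0 < b - Real.log (1 + b) := sub_log_pos hb (ne_of_lt hb0)
      have := Real.sqrt_lt_sqrt hgb.le hga
      nlinarith [this]
    · subst hb0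
      rw [Real.sign_of_neg ha0]
      have hga : 0 < a - Real.log (1 + a) := sub_log_pos ha (ne_of_lt ha0)
      have := Real.sqrt_pos.2 hga
      simp
      nlinarith
    · rw [Real.sign_of_neg ha0, Real.sign_of_pos hb0]
      have hga : 0 < a - Real.log (1 + a) := sub_log_pos ha (ne_of_lt ha0)
      have hgb : 0 ≤ b - Real.log (1 + b) := le_of_lt (sub_log_pos hb (ne_of_gt hb0))
      have h1 := Real.sqrt_pos.2 hga
      have h2 := Real.sqrt_nonneg (b - Real.log (1 + b))
      nlinarith
  · subst ha0
    have hb0 : 0 < b := hab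
    rw [Real.sign_of_pos hb0]
    have hgb : 0 < b - Real.log (1 + b) := sub_log_pos hb (ne_of_gt hb0)
    have := Real.sqrt_pos.2 hgb
    simp
    nlinarith
  · have hb0 : 0 < b := lt_trans ha0 hab
    rw [Real.sign_of_pos ha0, Real.sign_of_pos hb0]
    have hga : a - Real.log (1 + a) < b - Real.log (1 + b) :=
      gAux_strictMonoOn ha0.le hb0.le hab
    have h := Real.sqrt_lt_sqrt (le_of_lt (sub_log_pos ha (ne_of_gt ha0))) hga
    simpa using h
  
lemma hasDerivAt_phiAux {t : ℝ} (ht : -1 < t) (ht0 : t ≠ 0) :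
    HasDerivAt phiAux (phidAux t) t := by
  have hg := hasDerivAt_gAux ht
  have hgpos : 0 < t - Real.log (1 + t) := sub_log_pos ht ht0
  have hsq : HasDerivAt (fun x : ℝ => Real.sqrt (x - Real.log (1 + x)))
      (t / (1 + t) / (2 * Real.sqrt (t - Real.log (1 + t)))) t := hg.sqrt (ne_of_gt hgpos)
  rcases ht0.lt_or_gt with h | h
  · have heq : phiAux =ᶠ[nhds t] fun x => -Real.sqrt (x - Real.log (1 + x)) := by
      filter_upwards [Iio_mem_nhds h] with x hx
      simp [phiAux, Real.sign_of_neg hx]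
    have := hsq.neg.congr_of_eventuallyEq heq
    exact this.congr_deriv (by rw [phidAux, Real.sign_of_neg h]; ring)
  · have heq : phiAux =ᶠ[nhds t] fun x => Real.sqrt (x - Real.log (1 + x)) := by
      filter_upwards [Ioi_mem_nhds h] with x hx
      simp [phiAux, Real.sign_of_pos hx]
    have := hsq.congr_of_eventuallyEq heq
    exact this.congr_deriv (by rw [phidAux, Real.sign_of_pos h]; ring)

theorem stmt_7 (f : ℝ → ℝ)
    (hf : ∀ u : ℝ, f u ∈ Set.Ioi (-1 : ℝ) ∧
      Real.sign (f u) * Real.sqrt (f u - Real.log (1 + f u)) = u)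
    (y : ℝ → ℝ)
    (hy : ∀ v : ℝ, y v = if v = 0 then Real.sqrt 2 / 2 else v / f v)
    (s : ℝ) (hs : 0 < s) :
    Real.Gamma (s + 1) =
      (s / Real.exp 1) ^ s * Real.sqrt s *
        ∫ u in Set.Ioi (0 : ℝ),
          2 * (y (u / Real.sqrt s) + y (-(u / Real.sqrt s))) * Real.exp (-u ^ 2) := by
  have hrs : 0 < Real.sqrt s := Real.sqrt_pos.2 hs
  set rs := Real.sqrt s with hrs_def
  have hrs2 : rs * rs = s := Real.mul_self_sqrt hs.le
  have hsne : s ≠ 0 := hs.ne'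
  have hfinv : ∀ t : ℝ, -1 < t → f (phiAux t) = t := by
    intro t ht
    have h1 := (hf (phiAux t)).1
    have h2 : phiAux (f (phiAux t)) = phiAux t := (hf (phiAux t)).2
    exact phiAux_strictMonoOn.injOn h1 ht h2
  set S : Set ℝ := Ioi (0:ℝ) \ {s} with hS
  have hSmeas : MeasurableSet S := measurableSet_Ioi.diff (measurableSet_singleton s)
  have hmem : ∀ x ∈ S, -1 < x/s - 1 ∧ x/s - 1 ≠ 0 := by
    intro x hx
    obtain ⟨hx1, hx2⟩ := hx
    have hx1 : 0 < x := hx1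
    have hds : 0 < x/s := div_pos hx1 hs
    refine ⟨by linarith, fun h => hx2 ?_⟩
    have hxs : x = s := by field_simp at h; linarith
    simp [hxs]
  set ψ : ℝ → ℝ := fun x => rs * phiAux (x/s - 1) with hψ
  set ψd : ℝ → ℝ := fun x => rs * (phidAux (x/s - 1) * (1/s)) with hψd
  have hderiv : ∀ x ∈ S, HasDerivWithinAt ψ (ψd x) S x := by
    intro x hx
    obtain ⟨ht, ht0⟩ := hmem x hx
    have hinner : HasDerivAt (fun x : ℝ => x/s - 1) (1/s) x := by
      simpa using ((hasDerivAt_id x).div_const s).sub_const 1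
    exact (((hasDerivAt_phiAux ht ht0).comp x hinner).const_mul rs).hasDerivWithinAt
  have hinj : InjOn ψ S := by
    intro a ha b hb h
    have h1 := (hmem a ha).1
    have h2 := (hmem b hb).1
    have h3 : phiAux (a/s - 1) = phiAux (b/s - 1) :=
      mul_left_cancel₀ hrs.ne' h
    have h4 := phiAux_strictMonoOn.injOn h1 h2 h3
    have : a/s = b/s := by linarith
    field_simp at this
    exact this
  have himg : ψ '' S = Iio 0 ∪ Ioi 0 := by
    rw [Iio_union_Ioi]
    ext u
    simp only [mem_image, mem_compl_iff, mem_singleton_iff]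
    constructor
    · rintro ⟨x, hx, rfl⟩
      obtain ⟨ht, ht0⟩ := hmem x hx
      have hg := sub_log_pos ht ht0
      have hsq := Real.sqrt_pos.2 hg
      have hphi : phiAux (x/s - 1) ≠ 0 := by
        unfold phiAux
        rcases ht0.lt_or_gt with h | h
        · rw [Real.sign_of_neg h]; intro hc; nlinarith
        · rw [Real.sign_of_pos h]; intro hc; nlinarith
      exact mul_ne_zero hrs.ne' hphi
    · intro hu
      have hfm := (hf (u/rs)).1
      simp only [mem_Ioi] at hfm
      refine ⟨s * (1 + f (u/rs)), ⟨?_, ?_⟩, ?_⟩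
      · exact mul_pos hs (by linarith)
      · simp only [mem_singleton_iff]
        intro hc
        have hf0 : f (u/rs) = 0 := by
          have : s * (1 + f (u/rs)) = s * 1 := by rw [hc]; ring
          have := mul_left_cancel₀ hsne this
          linarith
        have h2 := (hf (u/rs)).2
        rw [hf0] at h2
        simp [Real.sign_zero] at h2
        exact hu (by field_simp at h2 ⊢; linarith [h2])
      · have harg : s * (1 + f (u/rs))/s - 1 = f (u/rs) := by field_simp; ring
        show rs * phiAux (s * (1 + f (u/rs))/s - 1) = u
        rw [harg, show phiAux (f (u/rs)) = u/rs from (hf (u/rs)).2]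
        field_simp
  set C : ℝ := rs / s * Real.exp s * s ^ (1 - s) with hC
  set G : ℝ → ℝ := fun u => 2 * (u/rs / f (u/rs)) * Real.exp (-u^2) with hG
  have hpt : ∀ x ∈ S, |ψd x| • G (ψ x) = C * (Real.exp (-x) * x ^ (s-1)) := by
    intro x hx
    obtain ⟨ht, ht0⟩ := hmem x hx
    set t := x/s - 1 with htdef
    have h1t : 0 < 1 + t := by linarith
    have hxt : x = s * (1+t) := by rw [htdef]; field_simp; ring
    have hg := sub_log_pos ht ht0
    set q := Real.sqrt (t - Real.log (1+t)) with hq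
    have hqpos : 0 < q := Real.sqrt_pos.2 hg
    have hq2 : q^2 = t - Real.log (1+t) := Real.sq_sqrt hg.le
    have hv : ψ x / rs = phiAux t := by
      rw [hψ]; exact mul_div_cancel_left₀ _ hrs.ne'
    have hfv : f (phiAux t) = t := hfinv t ht
    have hphit : phiAux t / t = q / |t| := by
      unfold phiAux; rw [← hq]
      rcases ht0.lt_or_gt with h | h
      · rw [Real.sign_of_neg h, abs_of_neg h]
        rw [div_eq_div_iff (ne_of_lt h) (by linarith : -t ≠ 0)]
        ring
      · rw [Real.sign_of_pos h, abs_of_pos h]; ring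
    have hsq : (ψ x)^2 = s * (t - Real.log (1+t)) := by
      have hphi2 : phiAux t ^ 2 = q^2 := by
        unfold phiAux; rw [← hq]
        rcases ht0.lt_or_gt with h | h
        · rw [Real.sign_of_neg h]; ring
        · rw [Real.sign_of_pos h]; ring
      rw [hψ]
      calc (rs * phiAux t)^2 = rs * rs * phiAux t ^ 2 := by ring
      _ = s * (t - Real.log (1+t)) := by rw [hrs2, hphi2, hq2]
    have habs : |ψd x| = rs / s * (|t| / (1+t) / (2*q)) := by
      rw [hψd]
      show |rs * (phidAux t * (1/s))| = _
      unfold phidAux; rw [← hq]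
      rcases ht0.lt_or_gt with h | h
      · rw [Real.sign_of_neg h, abs_of_neg h]
        have hpos : 0 < rs / s * (-t / (1+t) / (2*q)) :=
          mul_pos (div_pos hrs hs) (div_pos (div_pos (by linarith) h1t) (by positivity))
        rw [show rs * (-1 * (t/(1+t)/(2*q)) * (1/s)) = rs / s * (-t / (1+t) / (2*q)) by
          field_simp]
        exact abs_of_pos hpos
      · rw [Real.sign_of_pos h, abs_of_pos h]
        have hpos : 0 < rs / s * (t / (1+t) / (2*q)) :=
          mul_pos (div_pos hrs hs) (div_pos (div_pos h h1t) (by positivity))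
        rw [show rs * (1 * (t/(1+t)/(2*q)) * (1/s)) = rs / s * (t / (1+t) / (2*q)) by
          field_simp]
        exact abs_of_pos hpos
    have htne : |t| ≠ 0 := abs_ne_zero.2 ht0
    have hexp : Real.exp (-(ψ x)^2) = (1+t) ^ s * Real.exp (-(s*t)) := by
      rw [hsq, Real.rpow_def_of_pos h1t, ← Real.exp_add]
      congr 1; ring
    have key : C * Real.exp (-s) * s^(s-1) = rs / s := by
      have e1 : Real.exp s * Real.exp (-s) = 1 := by rw [← Real.exp_add]; simp
      have e2 : s^(1-s) * s^(s-1) = 1 := by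
        rw [← Real.rpow_add hs]; norm_num
      rw [hC, show rs/s * Real.exp s * s^(1-s) * Real.exp (-s) * s^(s-1)
        = rs/s * (Real.exp s * Real.exp (-s)) * (s^(1-s) * s^(s-1)) from by ring, e1, e2]
      ring
    calc |ψd x| • G (ψ x)
        = (rs/s * (|t|/(1+t)/(2*q))) * (2 * (phiAux t / t) * Real.exp (-(ψ x)^2)) := by
          rw [smul_eq_mul, habs, hG]
          simp only
          rw [hv, hfv]
      _ = rs/s * (|t|/(1+t)/(2*q)) * (2 * (q/|t|) * ((1+t)^s * Real.exp (-(s*t)))) := by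
          rw [hphit, hexp]
      _ = rs/s * ((1+t)^s/(1+t)) * Real.exp (-(s*t)) := by
          field_simp
      _ = rs/s * (1+t)^(s-1) * Real.exp (-(s*t)) := by
          rw [Real.rpow_sub_one h1t.ne']
      _ = C * (Real.exp (-x) * x^(s-1)) := by
          have e1 : Real.exp s * Real.exp (-s) = 1 := by rw [← Real.exp_add]; simp
          have e2 : s^(1-s) * s^(s-1) = 1 := by rw [← Real.rpow_add hs]; norm_num
          rw [hxt, hC, Real.mul_rpow hs.le h1t.le,
            show -(s*(1+t)) = -s + -(s*t) from by ring, Real.exp_add]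
          linear_combination (-(rs/s*(1+t)^(s-1)*Real.exp (-(s*t))*s^(1-s)*s^(s-1)))*e1
            - (rs/s*(1+t)^(s-1)*Real.exp (-(s*t)))*e2
  have hSae : S =ᵐ[volume] Ioi (0:ℝ) := by
    rw [hS]
    refine diff_ae_eq_self.2 ?_
    exact measure_mono_null (by intro x hx; exact hx.2 : Ioi (0:ℝ) ∩ {s} ⊆ {s}) Real.volume_singleton
  have key1 : ∫ u in Iio 0 ∪ Ioi 0, G u = C * Real.Gamma s := by
    rw [← himg, integral_image_eq_integral_abs_deriv_smul hSmeas hderiv hinj,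
      setIntegral_congr_fun hSmeas hpt, setIntegral_congr_set hSae,
      MeasureTheory.integral_const_mul, ← Real.Gamma_eq_integral hs]
  have hGint : IntegrableOn G (Iio 0 ∪ Ioi 0) := by
    rw [← himg, integrableOn_image_iff_integrableOn_abs_deriv_smul hSmeas hderiv hinj]
    have h0 : IntegrableOn (fun x => C * (Real.exp (-x) * x ^ (s-1))) (Ioi 0) :=
      (Real.GammaIntegral_convergent hs).const_mul C
    have h1 : IntegrableOn (fun x => C * (Real.exp (-x) * x ^ (s-1))) S :=
      h0.mono_set diff_subset
    exact h1.congr_fun (fun x hx => (hpt x hx).symm) hSmeas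
  set F : ℝ → ℝ := fun u => 2 * y (u/rs) * Real.exp (-u^2) with hFdef
  have hFG : EqOn G F (Iio 0 ∪ Ioi 0) := by
    intro u hu
    rw [Iio_union_Ioi] at hu
    have hu0 : u ≠ 0 := hu
    have hv0 : u / rs ≠ 0 := div_ne_zero hu0 hrs.ne'
    simp only [hG, hFdef, hy (u/rs), if_neg hv0]
  have hFIoi : IntegrableOn F (Ioi 0) :=
    (hGint.mono_set subset_union_right).congr_fun
      (hFG.mono subset_union_right) measurableSet_Ioi
  have hFIio : IntegrableOn F (Iio 0) :=
    (hGint.mono_set subset_union_left).congr_fun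
      (hFG.mono subset_union_left) measurableSet_Iio
  have hFneg : IntegrableOn (fun u => F (-u)) (Ioi 0) := by
    have h_map : (volume.restrict (Ioi (0:ℝ))).map Neg.neg = volume.restrict (Iio 0) := by
      conv_rhs => rw [← Measure.map_neg_eq_self (volume : Measure ℝ),
        measurableEmbedding_neg.restrict_map]
      simp
    rw [IntegrableOn, show (fun u => F (-u)) = F ∘ Neg.neg from rfl,
      ← measurableEmbedding_neg.integrable_map_iff, h_map]
    exact hFIio
  have hint : (∫ u in Set.Ioi (0 : ℝ),
      2 * (y (u / rs) + y (-(u / rs))) * Real.exp (-u ^ 2)) = C * Real.Gamma s := by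
    calc (∫ u in Set.Ioi (0 : ℝ), 2 * (y (u / rs) + y (-(u / rs))) * Real.exp (-u ^ 2))
        = ∫ u in Set.Ioi (0 : ℝ), (F u + F (-u)) := by
          refine integral_congr_ae (Filter.Eventually.of_forall fun u => ?_)
          simp only [hFdef, neg_sq, neg_div] 
          ring
      _ = (∫ u in Ioi (0:ℝ), F u) + ∫ u in Ioi (0:ℝ), F (-u) := integral_add hFIoi hFneg
      _ = (∫ u in Ioi (0:ℝ), F u) + ∫ u in Iio (0:ℝ), F u := by
          rw [integral_comp_neg_Ioi, neg_zero]
          congr 1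
          exact (setIntegral_congr_set Iio_ae_eq_Iic).symm
      _ = ∫ u in Iio 0 ∪ Ioi 0, F u := by
          rw [setIntegral_union ((Iio_disjoint_Ici le_rfl).mono_right Ioi_subset_Ici_self) measurableSet_Ioi hFIio hFIoi]
          norm_num [add_comm]
      _ = ∫ u in Iio 0 ∪ Ioi 0, G u :=
          setIntegral_congr_fun (measurableSet_Iio.union measurableSet_Ioi)
            (fun u hu => (hFG hu).symm)
      _ = C * Real.Gamma s := key1
  have hexps : Real.exp s ≠ 0 := (Real.exp_pos s).ne'
  have e2 : s ^ s * s^(1-s) = s := by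
    rw [← Real.rpow_add hs]; norm_num
  have hkey : (s / Real.exp 1)^s * rs * C = s := by
    rw [hC, Real.div_rpow hs.le (Real.exp_pos 1).le, Real.exp_one_rpow]
    field_simp
    linear_combination (rs*rs)*e2 + s*hrs2
  rw [hint, Real.Gamma_add_one hsne]
  linear_combination (-Real.Gamma s) * hkey
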